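/- Let (X,ρ,μ) be a metric measure space whose measure is Ahlfors d-regular, let T be an idempotent integral operator with kernel K satisfying ‖K‖_{S,θ} < ∞ for some θ ∈ (0,1], let V_p be the range space of T in L^p (1 ≤ p ≤ ∞), let Ω be a bounded domain, and let Γ_Ω ⊆ Ω be a discrete set with Voronoi partition {I_γ} of Ω and with d_H(Γ_Ω,Ω) ≤ 1. For h ∈ V_p define h_I = Σ_{γ∈Γ_Ω} h(γ) χ_{I_γ}. Then ‖h_I − h‖_{L^p(Ω)} ≤ ‖K‖_{S,θ} d_H(Γ_Ω,Ω)^θ ‖h‖_p for every h ∈ V_p. -/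

import Mathlib

open MeasureTheory Metric Set ENNReal Filter

noncomputable section

variable {X : Type*} [MetricSpace X] [MeasurableSpace X]

/-- The measure `μ` is Ahlfors `d`-regular with constants `D₁`, `D₂`. -/
def AhlforsRegular (μ : Measure X) (d D₁ D₂ : ℝ) : Prop :=
  ∀ (x : X) (r : ℝ), 0 ≤ r → ENNReal.ofReal r ≤ EMetric.diam (Set.univ : Set X) →
    ENNReal.ofReal (D₁ * r ^ d) ≤ μ (Metric.closedBall x r) ∧
      μ (Metric.closedBall x r) ≤ ENNReal.ofReal (D₂ * r ^ d)

/-- The Corkscrew condition with ratio `c` for a domain `D`. -/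
def Corkscrew (D : Set X) (c : ℝ) : Prop :=
  ∀ x ∈ frontier D, ∀ r : ℝ, 0 < r → ENNReal.ofReal r ≤ EMetric.diam (frontier D) →
    ∃ y ∈ D, Metric.closedBall y (c * r) ⊆ D ∩ Metric.closedBall x r

/-- Schur-type bound for a nonnegative kernel. -/
def schurBound (μ : Measure X) (A : X → X → ℝ≥0∞) : ℝ≥0∞ :=
  max (⨆ x, ∫⁻ y, A x y ∂μ) (⨆ y, ∫⁻ x, A x y ∂μ)

/-- Schur norm of a kernel `K`. -/
def schurS (μ : Measure X) (K : X → X → ℂ) : ℝ≥0∞ :=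
  schurBound μ (fun x y => (‖K x y‖₊ : ℝ≥0∞))

/-- Modulus of continuity of a kernel. -/
def moc (K : X → X → ℂ) (δ : ℝ) : X → X → ℝ≥0∞ := fun x y =>
  ⨆ x' ∈ Metric.closedBall x δ, ⨆ y' ∈ Metric.closedBall y δ,
    (‖K x' y' - K x y‖₊ : ℝ≥0∞)

/-- The norm `‖K‖_{S,θ}`. -/
def schurSθ (μ : Measure X) (K : X → X → ℂ) (θ : ℝ) : ℝ≥0∞ :=
  schurS μ K + ⨆ δ ∈ Set.Ioc (0:ℝ) 1, ENNReal.ofReal (δ ^ (-θ)) * schurBound μ (moc K δ)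

/-- The integral operator with kernel `K`. -/
def intOp (μ : Measure X) (K : X → X → ℂ) (f : X → ℂ) : X → ℂ :=
  fun x => ∫ y, K x y * f y ∂μ

/-- The range space `V_p` of the integral operator. -/
def VSpace (μ : Measure X) (K : X → X → ℂ) (p : ℝ≥0∞) : Set (X → ℂ) :=
  {f | MemLp f p μ ∧ intOp μ K f = f}

/-- The set of `ε`-concentrated signals on `Ω`. -/
def VConc (μ : Measure X) (K : X → X → ℂ) (p : ℝ≥0∞) (Ω : Set X) (ε : ℝ) : Set (X → ℂ) :=
  {f | f ∈ VSpace μ K p ∧ eLpNorm f p (μ.restrict Ωᶜ) ≤ ENNReal.ofReal ε * eLpNorm f p μ}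

/-- Voronoi partition of a set `A` associated with points `γ`. -/
def IsVoronoi {ι : Type*} (A : Set X) (γ : ι → X) (I : ι → Set X) : Prop :=
  (∀ i, MeasurableSet (I i)) ∧ Pairwise (Function.onFun Disjoint I) ∧
    (⋃ i, I i) = A ∧
    ∀ i, I i ⊆ {x ∈ A | dist x (γ i) = Metric.infDist x (Set.range γ)}

/-- `d_H(Γ, A) = sup_{x ∈ A} ρ(x, Γ)`. -/
def dHaus (Γ A : Set X) : ℝ := ⨆ x ∈ A, Metric.infDist x Γ

/-- The weighted sampling norm `‖(v_γ)‖_{p,μ(Γ)}`. -/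
def sampNorm (μ : Measure X) {ι : Type*} (I : ι → Set X) (p : ℝ≥0∞) (v : ι → ℂ) : ℝ≥0∞ :=
  if p = ∞ then ⨆ i, (‖v i‖₊ : ℝ≥0∞)
  else (∑' i, (‖v i‖₊ : ℝ≥0∞) ^ p.toReal * μ (I i)) ^ (1 / p.toReal)

/-- The preconstruction operator `S_Γ`. -/
def SGamma (μ : Measure X) (K : X → X → ℂ) {ι : Type*} (γ : ι → X) (I : ι → Set X)
    (g : X → ℂ) : X → ℂ :=
  fun x => ∑' i, (μ (I i)).toReal * intOp μ K g (γ i) * K x (γ i)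

/-- Iterative approximation algorithm: `f₀ = S_Γ f`, `f_n = f₀ + f_{n-1} - S_Γ f_{n-1}`. -/
def iterSeq (μ : Measure X) (K : X → X → ℂ) {ι : Type*} (γ : ι → X) (I : ι → Set X)
    (f : X → ℂ) : ℕ → X → ℂ
  | 0 => SGamma μ K γ I f
  | n + 1 => fun x =>
      SGamma μ K γ I f x + iterSeq μ K γ I f n x - SGamma μ K γ I (iterSeq μ K γ I f n) x

/-- Reconstruction algorithm: `g_n = g₀ + g_{n-1} - S_Γ g_{n-1}`. -/
def reconSeq (μ : Measure X) (K : X → X → ℂ) {ι : Type*} (γ : ι → X) (I : ι → Set X)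
    (g₀ : X → ℂ) : ℕ → X → ℂ
  | 0 => g₀
  | n + 1 => fun x =>
      g₀ x + reconSeq μ K γ I g₀ n x - SGamma μ K γ I (reconSeq μ K γ I g₀ n) x

/-- Preconstruction from sampled data `v`: `Σ_γ μ(I_γ) v_γ K(·,γ)`. -/
def preRecon (μ : Measure X) (K : X → X → ℂ) {ι : Type*} (γ : ι → X) (I : ι → Set X)
    (v : ι → ℂ) : X → ℂ :=
  fun x => ∑' i, (μ (I i)).toReal * v i * K x (γ i)



private lemma aux_sigmaFinite {X : Type*} [MetricSpace X] [MeasurableSpace X]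
    (μ : Measure X) (d D₁ D₂ : ℝ) (hreg : AhlforsRegular μ d D₁ D₂) :
    SigmaFinite μ := by
  rcases isEmpty_or_nonempty X with hX | hX
  · haveI : IsFiniteMeasure μ := ⟨by rw [Set.univ_eq_empty_iff.mpr hX]; simp⟩
    infer_instance
  · obtain ⟨x₀⟩ := hX
    by_cases hD : EMetric.diam (Set.univ : Set X) = ∞
    · refine Measure.sigmaFinite_of_countable
        (Set.countable_range fun n : ℕ => Metric.closedBall x₀ n) ?_ ?_
      · rintro s ⟨n, rfl⟩
        exact lt_of_le_of_lt (hreg x₀ n (Nat.cast_nonneg n) (hD ▸ le_top)).2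
          ENNReal.ofReal_lt_top
      · refine Set.eq_univ_of_forall fun z => ?_
        exact ⟨Metric.closedBall x₀ ⌈dist z x₀⌉₊, ⟨⌈dist z x₀⌉₊, rfl⟩,
          Metric.mem_closedBall.mpr (Nat.le_ceil _)⟩
    · haveI : IsFiniteMeasure μ := by
        constructor
        have h1 := (hreg x₀ (EMetric.diam (Set.univ : Set X)).toReal ENNReal.toReal_nonneg
          (by rw [ENNReal.ofReal_toReal hD])).2
        refine lt_of_le_of_lt (le_trans (measure_mono fun z _ => ?_) h1) ENNReal.ofReal_lt_top
        refine Metric.mem_closedBall.mpr ?_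
        rw [dist_edist]
        exact ENNReal.toReal_mono hD
          (EMetric.edist_le_diam_of_mem (Set.mem_univ _) (Set.mem_univ _))
      infer_instance

private lemma schur_lint {X : Type*} [MeasurableSpace X] (μ : Measure X) [SigmaFinite μ]
    {B : X → X → ℝ≥0∞} (hB : Measurable (Function.uncurry B))
    {ψ : X → ℝ≥0∞} (hψ : Measurable ψ)
    {C : ℝ≥0∞} (h1 : ∀ x, ∫⁻ y, B x y ∂μ ≤ C) (h2 : ∀ y, ∫⁻ x, B x y ∂μ ≤ C)
    {r : ℝ} (hr : 1 ≤ r) :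
    ∫⁻ x, (∫⁻ y, B x y * ψ y ∂μ) ^ r ∂μ ≤ C ^ r * ∫⁻ y, ψ y ^ r ∂μ := by
  have hr0 : (0:ℝ) < r := lt_of_lt_of_le one_pos hr
  have hBx : ∀ x, Measurable (B x) := fun x => hB.comp measurable_prodMk_left
  have hBy : ∀ y, Measurable (fun x => B x y) := fun y => hB.comp measurable_prodMk_right
  rcases eq_or_ne C 0 with hC0 | hC0
  · have hzero : ∀ x, ∫⁻ y, B x y * ψ y ∂μ = 0 := by
      intro x
      have h0 : ∫⁻ y, B x y ∂μ = 0 := le_antisymm (hC0 ▸ h1 x) (zero_le)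
      have hae := (lintegral_eq_zero_iff (hBx x)).1 h0
      have hz : (fun y => B x y * ψ y) =ᵐ[μ] 0 := hae.mono fun y hy => by
        simp only [Pi.zero_apply] at hy ⊢; rw [hy, zero_mul]
      rw [lintegral_congr_ae hz]; simp
    simp only [hzero, ENNReal.zero_rpow_of_pos hr0, lintegral_zero]
    exact zero_le
  rcases eq_or_ne C ∞ with hCt | hCt
  · rcases eq_or_ne (∫⁻ y, ψ y ^ r ∂μ) 0 with hψ0 | hψ0
    · have hae := (lintegral_eq_zero_iff (hψ.pow_const r)).1 hψ0
      have hψz : ∀ᵐ y ∂μ, ψ y = 0 := hae.mono fun y hy => by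
        simp only [Pi.zero_apply] at hy
        rcases ENNReal.rpow_eq_zero_iff.1 hy with ⟨h, _⟩ | ⟨_, h⟩
        · exact h
        · linarith
      have hzero : ∀ x, ∫⁻ y, B x y * ψ y ∂μ = 0 := fun x => by
        have hz : (fun y => B x y * ψ y) =ᵐ[μ] 0 := hψz.mono fun y hy => by
          simp only [Pi.zero_apply]; rw [hy, mul_zero]
        rw [lintegral_congr_ae hz]; simp
      simp only [hzero, ENNReal.zero_rpow_of_pos hr0, lintegral_zero]
      exact zero_le
    · rw [hCt, ENNReal.top_rpow_of_pos hr0, ENNReal.top_mul hψ0]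
      exact le_top
  have key : ∀ x, (∫⁻ y, B x y * ψ y ∂μ) ^ r ≤ C ^ (r - 1) * ∫⁻ y, B x y * ψ y ^ r ∂μ := by
    intro x
    rcases eq_or_lt_of_le hr with hr1 | hr1
    · simp only [← hr1, ENNReal.rpow_one, sub_self, ENNReal.rpow_zero, one_mul]
      exact le_rfl
    · have hconj : ((r/(r-1)).HolderConjugate r) := (Real.HolderConjugate.conjExponent hr1).symm
      set q : ℝ := r / (r - 1) with hqdef
      have hq1 : 1 < q := hconj.lt
      have hq0 : (0:ℝ) < q := lt_trans one_pos hq1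
      have hsum : 1/q + 1/r = 1 := by rw [one_div, one_div]; exact hconj.inv_add_inv_eq_one
      have hrq : r / q = r - 1 := by
        rw [hqdef]
        have h1' : r - 1 ≠ 0 := sub_ne_zero.mpr hr1.ne'
        field_simp
      have hH := ENNReal.lintegral_mul_le_Lp_mul_Lq μ hconj
        ((hBx x).pow_const (1/q)).aemeasurable
        (((hBx x).pow_const (1/r)).mul hψ).aemeasurable
      have hfg : ∀ y, ((fun y => B x y ^ (1/q)) * fun y => B x y ^ (1/r) * ψ y) y
          = B x y * ψ y := by
        intro y
        simp only [Pi.mul_apply]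
        rw [← mul_assoc, ← ENNReal.rpow_add_of_nonneg (1/q) (1/r) (by positivity) (by positivity),
          hsum, ENNReal.rpow_one]
      have e1 : ∫⁻ y, (B x y ^ (1/q)) ^ q ∂μ = ∫⁻ y, B x y ∂μ :=
        lintegral_congr fun y => by
          rw [← ENNReal.rpow_mul, one_div, inv_mul_cancel₀ hq0.ne', ENNReal.rpow_one]
      have e2 : ∫⁻ y, (B x y ^ (1/r) * ψ y) ^ r ∂μ = ∫⁻ y, B x y * ψ y ^ r ∂μ :=
        lintegral_congr fun y => by
          rw [ENNReal.mul_rpow_of_nonneg _ _ hr0.le, ← ENNReal.rpow_mul, one_div,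
            inv_mul_cancel₀ hr0.ne', ENNReal.rpow_one]
      have hH2 : ∫⁻ y, B x y * ψ y ∂μ
          ≤ (∫⁻ y, B x y ∂μ) ^ (1/q) * (∫⁻ y, B x y * ψ y ^ r ∂μ) ^ (1/r) := by
        calc ∫⁻ y, B x y * ψ y ∂μ
            = ∫⁻ y, ((fun y => B x y ^ (1/q)) * fun y => B x y ^ (1/r) * ψ y) y ∂μ :=
              (lintegral_congr hfg).symm
          _ ≤ (∫⁻ y, (B x y ^ (1/q)) ^ q ∂μ) ^ (1/q)
              * (∫⁻ y, (B x y ^ (1/r) * ψ y) ^ r ∂μ) ^ (1/r) := hH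
          _ = _ := by rw [e1, e2]
      calc (∫⁻ y, B x y * ψ y ∂μ) ^ r
          ≤ ((∫⁻ y, B x y ∂μ) ^ (1/q) * (∫⁻ y, B x y * ψ y ^ r ∂μ) ^ (1/r)) ^ r :=
            ENNReal.rpow_le_rpow hH2 hr0.le
        _ = (∫⁻ y, B x y ∂μ) ^ (r/q) * ∫⁻ y, B x y * ψ y ^ r ∂μ := by
            rw [ENNReal.mul_rpow_of_nonneg _ _ hr0.le, ← ENNReal.rpow_mul, ← ENNReal.rpow_mul]
            congr 1
            · congr 1; field_simp
            · rw [one_div, inv_mul_cancel₀ hr0.ne', ENNReal.rpow_one]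
        _ ≤ C ^ (r/q) * ∫⁻ y, B x y * ψ y ^ r ∂μ := by
            exact mul_le_mul_left (ENNReal.rpow_le_rpow (h1 x) (by positivity)) _
        _ = C ^ (r - 1) * ∫⁻ y, B x y * ψ y ^ r ∂μ := by rw [hrq]
  have hinner : Measurable (Function.uncurry fun x y => B x y * ψ y ^ r) :=
    hB.mul ((hψ.comp measurable_snd).pow_const r)
  calc ∫⁻ x, (∫⁻ y, B x y * ψ y ∂μ) ^ r ∂μ
      ≤ ∫⁻ x, C ^ (r-1) * ∫⁻ y, B x y * ψ y ^ r ∂μ ∂μ := lintegral_mono key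
    _ = C ^ (r-1) * ∫⁻ x, ∫⁻ y, B x y * ψ y ^ r ∂μ ∂μ :=
        lintegral_const_mul' _ _ (ENNReal.rpow_lt_top_of_nonneg (by linarith) hCt).ne
    _ = C ^ (r-1) * ∫⁻ y, ∫⁻ x, B x y * ψ y ^ r ∂μ ∂μ := by
        rw [lintegral_lintegral_swap hinner.aemeasurable]
    _ ≤ C ^ (r-1) * ∫⁻ y, C * ψ y ^ r ∂μ := by
        gcongr with y
        rw [lintegral_mul_const _ (hBy y)]
        exact mul_le_mul_left (h2 y) _
    _ = C ^ (r-1) * (C * ∫⁻ y, ψ y ^ r ∂μ) := by rw [lintegral_const_mul' _ _ hCt]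
    _ = C ^ r * ∫⁻ y, ψ y ^ r ∂μ := by
        rw [← mul_assoc]
        congr 1
        calc C ^ (r-1) * C = C ^ (r-1) * C ^ (1:ℝ) := by rw [ENNReal.rpow_one]
          _ = C ^ (r-1+1) := (ENNReal.rpow_add _ _ hC0 hCt).symm
          _ = C ^ r := by ring_nf

private lemma aux_fin {X : Type*} [MeasurableSpace X] (μ : Measure X) [SigmaFinite μ]
    {A : X → X → ℝ≥0∞} (hA : Measurable (Function.uncurry A))
    {C : ℝ≥0∞} (hC : C < ∞) (h1 : ∀ x, ∫⁻ y, A x y ∂μ ≤ C) (h2 : ∀ y, ∫⁻ x, A x y ∂μ ≤ C)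
    {p : ℝ≥0∞} (hp : 1 ≤ p) {h : X → ℂ} (hmem : MemLp h p μ) :
    ∀ᵐ x ∂μ, ∫⁻ y, A x y * ‖h y‖₊ ∂μ < ∞ := by
  have hφae : AEMeasurable (fun y => (‖h y‖₊ : ℝ≥0∞)) μ := hmem.1.enorm
  set ψ := hφae.mk _ with hψdef
  have hψm : Measurable ψ := hφae.measurable_mk
  have hφψ : (fun y => (‖h y‖₊ : ℝ≥0∞)) =ᵐ[μ] ψ := hφae.ae_eq_mk
  have hgeq : ∀ x, ∫⁻ y, A x y * ‖h y‖₊ ∂μ = ∫⁻ y, A x y * ψ y ∂μ := fun x =>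
    lintegral_congr_ae (hφψ.mono fun y hy => by simp only [hy])
  by_cases hptop : p = ∞
  · have hc : eLpNormEssSup h μ < ∞ := by
      rw [← eLpNorm_exponent_top]
      exact hptop ▸ hmem.2
    have hφc : ∀ᵐ y ∂μ, (‖h y‖₊ : ℝ≥0∞) ≤ eLpNormEssSup h μ := ae_le_eLpNormEssSup
    refine Filter.Eventually.of_forall fun x => ?_
    calc ∫⁻ y, A x y * ‖h y‖₊ ∂μ ≤ ∫⁻ y, A x y * eLpNormEssSup h μ ∂μ :=
          lintegral_mono_ae (hφc.mono fun y hy => mul_le_mul_right hy _)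
      _ = (∫⁻ y, A x y ∂μ) * eLpNormEssSup h μ :=
          lintegral_mul_const _ (hA.comp measurable_prodMk_left)
      _ ≤ C * eLpNormEssSup h μ := mul_le_mul_left (h1 x) _
      _ < ∞ := ENNReal.mul_lt_top hC hc
  · have hp0 : p ≠ 0 := (zero_lt_one.trans_le hp).ne'
    have hr1 : (1:ℝ) ≤ p.toReal := by
      rw [← ENNReal.toReal_one]
      exact ENNReal.toReal_mono hptop hp
    have hr0 : (0:ℝ) < p.toReal := zero_lt_one.trans_le hr1
    have hsn : ∫⁻ y, (‖h y‖₊ : ℝ≥0∞) ^ p.toReal ∂μ < ∞ := by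
      have he := eLpNorm_eq_lintegral_rpow_enorm_toReal hp0 hptop (f := h) (μ := μ)
      simp only [enorm_eq_nnnorm] at he
      have h2' := hmem.2
      rw [he] at h2'
      by_contra hcon
      rw [not_lt, top_le_iff] at hcon
      rw [hcon, ENNReal.top_rpow_of_pos (by positivity)] at h2'
      exact lt_irrefl _ h2'
    have hψr : ∫⁻ y, ψ y ^ p.toReal ∂μ = ∫⁻ y, (‖h y‖₊ : ℝ≥0∞) ^ p.toReal ∂μ :=
      lintegral_congr_ae (hφψ.symm.mono fun y hy => by simp only [hy])
    have hb := schur_lint μ hA hψm h1 h2 hr1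
    have hne : ∫⁻ x, (∫⁻ y, A x y * ψ y ∂μ) ^ p.toReal ∂μ ≠ ∞ :=
      (hb.trans_lt (ENNReal.mul_lt_top
        (ENNReal.rpow_lt_top_of_nonneg hr0.le hC.ne) (hψr ▸ hsn))).ne
    have hmeas : Measurable fun x => ∫⁻ y, A x y * ψ y ∂μ :=
      Measurable.lintegral_prod_right (hA.mul (hψm.comp measurable_snd))
    filter_upwards [ae_lt_top (hmeas.pow_const p.toReal) hne] with x hx
    rw [hgeq x]
    by_contra hcon
    rw [not_lt, top_le_iff] at hcon
    rw [hcon, ENNReal.top_rpow_of_pos hr0] at hx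
    exact lt_irrefl _ hx

private lemma aux_norm {X : Type*} [MeasurableSpace X] (μ ν : Measure X) [SigmaFinite μ]
    (hν : ν ≤ μ) {A : X → X → ℝ≥0∞} (hA : Measurable (Function.uncurry A))
    {C : ℝ≥0∞} (h1 : ∀ x, ∫⁻ y, A x y ∂μ ≤ C) (h2 : ∀ y, ∫⁻ x, A x y ∂μ ≤ C)
    {p : ℝ≥0∞} (hp : 1 ≤ p) {h : X → ℂ} (hmem : MemLp h p μ)
    {F : X → ℂ} (hF : ∀ᵐ x ∂ν, (‖F x‖₊ : ℝ≥0∞) ≤ ∫⁻ y, A x y * ‖h y‖₊ ∂μ) :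
    eLpNorm F p ν ≤ C * eLpNorm h p μ := by
  have hφae : AEMeasurable (fun y => (‖h y‖₊ : ℝ≥0∞)) μ := hmem.1.enorm
  set ψ := hφae.mk _ with hψdef
  have hψm : Measurable ψ := hφae.measurable_mk
  have hφψ : (fun y => (‖h y‖₊ : ℝ≥0∞)) =ᵐ[μ] ψ := hφae.ae_eq_mk
  have hgeq : ∀ x, ∫⁻ y, A x y * ‖h y‖₊ ∂μ = ∫⁻ y, A x y * ψ y ∂μ := fun x =>
    lintegral_congr_ae (hφψ.mono fun y hy => by simp only [hy])
  by_cases hptop : p = ∞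
  · subst hptop
    rw [eLpNorm_exponent_top, eLpNorm_exponent_top]
    have hφc : ∀ᵐ y ∂μ, (‖h y‖₊ : ℝ≥0∞) ≤ eLpNormEssSup h μ := ae_le_eLpNormEssSup
    have hgle : ∀ x, ∫⁻ y, A x y * ‖h y‖₊ ∂μ ≤ C * eLpNormEssSup h μ := by
      intro x
      calc ∫⁻ y, A x y * ‖h y‖₊ ∂μ ≤ ∫⁻ y, A x y * eLpNormEssSup h μ ∂μ :=
            lintegral_mono_ae (hφc.mono fun y hy => mul_le_mul_right hy _)
        _ = (∫⁻ y, A x y ∂μ) * eLpNormEssSup h μ :=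
            lintegral_mul_const _ (hA.comp measurable_prodMk_left)
        _ ≤ C * eLpNormEssSup h μ := mul_le_mul_left (h1 x) _
    refine essSup_le_of_ae_le _ ?_
    filter_upwards [hF] with x hx using hx.trans (hgle x)
  · have hp0 : p ≠ 0 := (zero_lt_one.trans_le hp).ne'
    have hr1 : (1:ℝ) ≤ p.toReal := by
      rw [← ENNReal.toReal_one]
      exact ENNReal.toReal_mono hptop hp
    have hr0 : (0:ℝ) < p.toReal := zero_lt_one.trans_le hr1
    have hψr : ∫⁻ y, ψ y ^ p.toReal ∂μ = ∫⁻ y, (‖h y‖₊ : ℝ≥0∞) ^ p.toReal ∂μ :=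
      lintegral_congr_ae (hφψ.symm.mono fun y hy => by simp only [hy])
    have hschur := schur_lint μ hA hψm h1 h2 hr1
    rw [eLpNorm_eq_lintegral_rpow_enorm_toReal hp0 hptop,
      eLpNorm_eq_lintegral_rpow_enorm_toReal hp0 hptop]
    calc (∫⁻ x, (‖F x‖₊ : ℝ≥0∞) ^ p.toReal ∂ν) ^ (1/p.toReal)
        ≤ (∫⁻ x, (∫⁻ y, A x y * ψ y ∂μ) ^ p.toReal ∂ν) ^ (1/p.toReal) := by
          refine ENNReal.rpow_le_rpow (lintegral_mono_ae (hF.mono fun x hx => ?_))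
            (by positivity)
          exact ENNReal.rpow_le_rpow (hx.trans (hgeq x).le) hr0.le
      _ ≤ (∫⁻ x, (∫⁻ y, A x y * ψ y ∂μ) ^ p.toReal ∂μ) ^ (1/p.toReal) :=
          ENNReal.rpow_le_rpow (lintegral_mono' hν le_rfl) (by positivity)
      _ ≤ (C ^ p.toReal * ∫⁻ y, ψ y ^ p.toReal ∂μ) ^ (1/p.toReal) :=
          ENNReal.rpow_le_rpow hschur (by positivity)
      _ = C * (∫⁻ y, (‖h y‖₊ : ℝ≥0∞) ^ p.toReal ∂μ) ^ (1/p.toReal) := by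
          rw [hψr, ENNReal.mul_rpow_of_nonneg _ _ (by positivity), ← ENNReal.rpow_mul,
            mul_one_div_cancel hr0.ne', ENNReal.rpow_one]

set_option maxHeartbeats 1000000 in
theorem statement7 {X : Type*} [MetricSpace X] [MeasurableSpace X] [BorelSpace X]
    (μ : Measure X) (d D₁ D₂ : ℝ) (hd : 0 < d) (hD₁ : 0 < D₁) (hD₂ : 0 < D₂)
    (hreg : AhlforsRegular μ d D₁ D₂)
    (K : X → X → ℂ) (hKm : Measurable (Function.uncurry K))
    (θ : ℝ) (hθ0 : 0 < θ) (hθ1 : θ ≤ 1) (hK : schurSθ μ K θ < ∞)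
    (p : ℝ≥0∞) (hp : 1 ≤ p)
    (hT : ∀ f : X → ℂ, MemLp f p μ → intOp μ K (intOp μ K f) = intOp μ K f)
    (Ω : Set X) (hΩb : Bornology.IsBounded Ω) (hΩm : MeasurableSet Ω)
    {ι : Type*} [Countable ι]
    (γ : ι → X) (hγ : Set.range γ ⊆ Ω) (I : ι → Set X) (hV : IsVoronoi Ω γ I)
    (hdH : dHaus (Set.range γ) Ω ≤ 1) :
    ∀ h ∈ VSpace μ K p,
      eLpNorm (fun x => (∑' i, (I i).indicator (fun _ => h (γ i)) x) - h x) p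
          (μ.restrict Ω) ≤
        ENNReal.ofReal ((schurSθ μ K θ).toReal * dHaus (Set.range γ) Ω ^ θ) *
          eLpNorm h p μ := by
  classical
  obtain ⟨hVmeas, hVdisj, hVunion, hVsub⟩ := hV
  intro h hh
  obtain ⟨hmem, hfix⟩ := hh
  by_cases hΩe : Ω = ∅
  · rw [hΩe, Measure.restrict_empty, eLpNorm_measure_zero]
    exact zero_le
  obtain ⟨x₀, hx₀⟩ := Set.nonempty_iff_ne_empty.2 hΩe
  obtain ⟨i₀, hi₀⟩ : ∃ i, x₀ ∈ I i := by rw [← Set.mem_iUnion, hVunion]; exact hx₀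
  haveI : Nonempty ι := ⟨i₀⟩
  haveI : SigmaFinite μ := aux_sigmaFinite μ d D₁ D₂ hreg
  set δ₀ := dHaus (Set.range γ) Ω with hδ₀def
  obtain ⟨Cb, hCb⟩ := Metric.isBounded_iff.1 hΩb
  have hγΩ : ∀ i, γ i ∈ Ω := fun i => hγ ⟨i, rfl⟩
  have hf_bdd : ∀ x : X, (⨆ _ : x ∈ Ω, Metric.infDist x (Set.range γ)) ≤ max Cb 0 := by
    intro x
    by_cases hx : x ∈ Ω
    · rw [ciSup_pos hx]
      exact le_max_of_le_left
        ((Metric.infDist_le_dist_of_mem (Set.mem_range_self i₀)).trans (hCb hx (hγΩ i₀)))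
    · simp only [hx]
      rw [Real.iSup_of_isEmpty]
      exact le_max_of_le_right le_rfl
  have hbdd : BddAbove (Set.range fun x : X => ⨆ _ : x ∈ Ω, Metric.infDist x (Set.range γ)) :=
    ⟨max Cb 0, by rintro _ ⟨x, rfl⟩; exact hf_bdd x⟩
  have hδle : ∀ x ∈ Ω, Metric.infDist x (Set.range γ) ≤ δ₀ := by
    intro x hx
    have h1 := le_ciSup hbdd x
    rwa [ciSup_pos hx] at h1
  have hδ₀0 : 0 ≤ δ₀ := Metric.infDist_nonneg.trans (hδle x₀ hx₀)
  have hdist : ∀ i, ∀ x ∈ I i, dist x (γ i) ≤ δ₀ := by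
    intro i x hx
    have h1 := hVsub i hx
    rw [h1.2]
    exact hδle x h1.1
  by_cases hδz : δ₀ = 0
  · have hzero : ∀ x ∈ Ω, (∑' i, (I i).indicator (fun _ => h (γ i)) x) - h x = 0 := by
      intro x hx
      obtain ⟨i, hi⟩ : ∃ i, x ∈ I i := by rw [← Set.mem_iUnion, hVunion]; exact hx
      have hxγ : x = γ i := by
        have h2 := hdist i x hi
        rw [hδz] at h2
        exact dist_le_zero.1 h2
      have htsum : (∑' j, (I j).indicator (fun _ => h (γ j)) x) = h (γ i) := by
        rw [tsum_eq_single i fun j hj =>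
          Set.indicator_of_notMem (Set.disjoint_right.1 (hVdisj hj) hi) _,
          Set.indicator_of_mem hi]
      rw [htsum, ← hxγ, sub_self]
    have hzn : eLpNorm (fun x => (∑' i, (I i).indicator (fun _ => h (γ i)) x) - h x) p
        (μ.restrict Ω) = 0 := by
      rw [eLpNorm_congr_ae (g := fun _ => (0:ℂ)) ?_, eLpNorm_zero']
      filter_upwards [self_mem_ae_restrict hΩm] with x hx using hzero x hx
    rw [hzn]
    exact zero_le
  have hδpos : 0 < δ₀ := lt_of_le_of_ne hδ₀0 (Ne.symm hδz)
  have hδle1 : δ₀ ≤ 1 := hdH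
  have hC₀M : schurS μ K ≤ schurSθ μ K θ := le_self_add
  have hCmM : schurBound μ (moc K δ₀) ≤ ENNReal.ofReal (δ₀ ^ θ) * schurSθ μ K θ := by
    have hle : ENNReal.ofReal (δ₀ ^ (-θ)) * schurBound μ (moc K δ₀) ≤ schurSθ μ K θ := by
      rw [schurSθ]
      refine le_add_left ?_
      exact le_iSup₂_of_le δ₀ ⟨hδpos, hδle1⟩ le_rfl
    calc schurBound μ (moc K δ₀)
        = (ENNReal.ofReal (δ₀ ^ θ) * ENNReal.ofReal (δ₀ ^ (-θ))) * schurBound μ (moc K δ₀) := by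
          rw [← ENNReal.ofReal_mul (Real.rpow_nonneg hδ₀0 θ), ← Real.rpow_add hδpos,
            add_neg_cancel, Real.rpow_zero, ENNReal.ofReal_one, one_mul]
      _ = ENNReal.ofReal (δ₀ ^ θ) * (ENNReal.ofReal (δ₀ ^ (-θ)) * schurBound μ (moc K δ₀)) := by
          ring
      _ ≤ ENNReal.ofReal (δ₀ ^ θ) * schurSθ μ K θ := mul_le_mul_right hle _
  set B : X → X → ℝ≥0∞ :=
    fun x y => ∑' i, (I i).indicator (fun x' => (‖K (γ i) y - K x' y‖₊ : ℝ≥0∞)) x with hBdef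
  have hBmeas : Measurable (Function.uncurry B) := by
    have heq : Function.uncurry B = fun q : X × X =>
        ∑' i, (Prod.fst ⁻¹' (I i)).indicator
          (fun q : X × X => (‖K (γ i) q.2 - K q.1 q.2‖₊ : ℝ≥0∞)) q := by
      funext q
      show B q.1 q.2 = _
      rw [hBdef]
      refine tsum_congr fun i => ?_
      by_cases hq : q.1 ∈ I i <;> simp [Set.indicator, hq]
    rw [heq]
    refine Measurable.ennreal_tsum fun i => Measurable.indicator ?_
      ((hVmeas i).preimage measurable_fst)
    exact ((hKm.comp (measurable_const.prodMk measurable_snd)).sub hKm).nnnorm.coe_nnreal_ennreal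
  have hBval : ∀ i, ∀ x ∈ I i, ∀ y, B x y = (‖K (γ i) y - K x y‖₊ : ℝ≥0∞) := by
    intro i x hx y
    show (∑' j, (I j).indicator (fun x' => (‖K (γ j) y - K x' y‖₊ : ℝ≥0∞)) x) = _
    rw [tsum_eq_single i fun j hj =>
      Set.indicator_of_notMem (Set.disjoint_right.1 (hVdisj hj) hx) _,
      Set.indicator_of_mem hx]
  have hBle : ∀ x y, B x y ≤ moc K δ₀ x y := by
    intro x y
    by_cases hx : ∃ i, x ∈ I i
    · obtain ⟨i, hi⟩ := hx
      rw [hBval i x hi y]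
      show _ ≤ ⨆ x' ∈ Metric.closedBall x δ₀, ⨆ y' ∈ Metric.closedBall y δ₀,
        (‖K x' y' - K x y‖₊ : ℝ≥0∞)
      refine le_iSup₂_of_le (γ i) ?_ (le_iSup₂_of_le y ?_ le_rfl)
      · exact Metric.mem_closedBall.2 (by rw [dist_comm]; exact hdist i x hi)
      · exact Metric.mem_closedBall_self hδ₀0
    · have hz : B x y = 0 := by
        show (∑' j, (I j).indicator (fun x' => (‖K (γ j) y - K x' y‖₊ : ℝ≥0∞)) x) = 0
        rw [tsum_congr fun i =>
          Set.indicator_of_notMem (fun hxi => hx ⟨i, hxi⟩) _, tsum_zero]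
      rw [hz]
      exact zero_le
  have hB1 : ∀ x, ∫⁻ y, B x y ∂μ ≤ schurBound μ (moc K δ₀) := by
    intro x
    refine (lintegral_mono fun y => hBle x y).trans ?_
    rw [schurBound]
    exact (le_iSup (fun x => ∫⁻ y, moc K δ₀ x y ∂μ) x).trans (le_max_left _ _)
  have hB2 : ∀ y, ∫⁻ x, B x y ∂μ ≤ schurBound μ (moc K δ₀) := by
    intro y
    refine (lintegral_mono fun x => hBle x y).trans ?_
    rw [schurBound]
    exact (le_iSup (fun y => ∫⁻ x, moc K δ₀ x y ∂μ) y).trans (le_max_right _ _)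
  have hK1 : ∀ x, ∫⁻ y, (‖K x y‖₊ : ℝ≥0∞) ∂μ ≤ schurSθ μ K θ := by
    intro x
    refine le_trans ?_ hC₀M
    rw [schurS, schurBound]
    exact (le_iSup (fun x => ∫⁻ y, (‖K x y‖₊ : ℝ≥0∞) ∂μ) x).trans (le_max_left _ _)
  have hK2 : ∀ y, ∫⁻ x, (‖K x y‖₊ : ℝ≥0∞) ∂μ ≤ schurSθ μ K θ := by
    intro y
    refine le_trans ?_ hC₀M
    rw [schurS, schurBound]
    exact (le_iSup (fun y => ∫⁻ x, (‖K x y‖₊ : ℝ≥0∞) ∂μ) y).trans (le_max_right _ _)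
  have hKsec : ∀ z : X, Measurable fun y => K z y :=
    fun z => hKm.comp measurable_prodMk_left
  have hfinG : ∀ᵐ x ∂μ, ∫⁻ y, (‖K x y‖₊ : ℝ≥0∞) * ‖h y‖₊ ∂μ < ∞ :=
    aux_fin μ (A := fun x y => (‖K x y‖₊ : ℝ≥0∞)) hKm.nnnorm.coe_nnreal_ennreal hK hK1 hK2 hp hmem
  have hBC : schurBound μ (moc K δ₀) < ∞ :=
    hCmM.trans_lt (ENNReal.mul_lt_top ENNReal.ofReal_lt_top hK)
  have hfing : ∀ᵐ x ∂μ, ∫⁻ y, B x y * ‖h y‖₊ ∂μ < ∞ :=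
    aux_fin μ hBmeas hBC hB1 hB2 hp hmem
  have haemain : ∀ᵐ x ∂(μ.restrict Ω),
      (‖(∑' i, (I i).indicator (fun _ => h (γ i)) x) - h x‖₊ : ℝ≥0∞)
        ≤ ∫⁻ y, B x y * ‖h y‖₊ ∂μ := by
    filter_upwards [self_mem_ae_restrict hΩm, ae_restrict_of_ae (hfinG.and hfing)]
      with x hxΩ hxfin
    obtain ⟨i, hi⟩ : ∃ i, x ∈ I i := by rw [← Set.mem_iUnion, hVunion]; exact hxΩ
    have htsum : (∑' j, (I j).indicator (fun _ => h (γ j)) x) = h (γ i) := by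
      rw [tsum_eq_single i fun j hj =>
        Set.indicator_of_notMem (Set.disjoint_right.1 (hVdisj hj) hi) _,
        Set.indicator_of_mem hi]
    have hsecm : ∀ z : X, AEStronglyMeasurable (fun y => K z y * h y) μ := fun z =>
      (hKsec z).aestronglyMeasurable.mul hmem.1
    have hGint : ∫⁻ y, (‖K x y * h y‖₊ : ℝ≥0∞) ∂μ
        = ∫⁻ y, (‖K x y‖₊ : ℝ≥0∞) * ‖h y‖₊ ∂μ :=
      lintegral_congr fun y => by rw [nnnorm_mul, ENNReal.coe_mul]
    have hint1 : Integrable (fun y => K x y * h y) μ := by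
      refine ⟨hsecm x, ?_⟩
      show ∫⁻ y, (‖K x y * h y‖₊ : ℝ≥0∞) ∂μ < ⊤
      rw [hGint]
      exact hxfin.1
    have hBx : ∀ y, B x y = (‖K (γ i) y - K x y‖₊ : ℝ≥0∞) := hBval i x hi
    have hgx : ∫⁻ y, (‖(K (γ i) y - K x y) * h y‖₊ : ℝ≥0∞) ∂μ
        = ∫⁻ y, B x y * ‖h y‖₊ ∂μ :=
      lintegral_congr fun y => by rw [nnnorm_mul, ENNReal.coe_mul, hBx y]
    have hint2 : Integrable (fun y => K (γ i) y * h y) μ := by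
      refine ⟨hsecm (γ i), ?_⟩
      show ∫⁻ y, (‖K (γ i) y * h y‖₊ : ℝ≥0∞) ∂μ < ⊤
      have hbound : ∫⁻ y, (‖K (γ i) y * h y‖₊ : ℝ≥0∞) ∂μ
          ≤ (∫⁻ y, (‖K x y‖₊ : ℝ≥0∞) * ‖h y‖₊ ∂μ) + ∫⁻ y, B x y * ‖h y‖₊ ∂μ := by
        calc ∫⁻ y, (‖K (γ i) y * h y‖₊ : ℝ≥0∞) ∂μ
            ≤ ∫⁻ y, ((‖K x y * h y‖₊ : ℝ≥0∞)
                + (‖(K (γ i) y - K x y) * h y‖₊ : ℝ≥0∞)) ∂μ := by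
              refine lintegral_mono fun y => ?_
              have he : K (γ i) y * h y = K x y * h y + (K (γ i) y - K x y) * h y := by
                ring
              rw [he, ← ENNReal.coe_add]
              exact ENNReal.coe_le_coe.2 (nnnorm_add_le _ _)
          _ = _ := by rw [lintegral_add_left' (f := fun y => (‖K x y * h y‖₊ : ℝ≥0∞)) (hsecm x).enorm, hGint, hgx]
      exact lt_of_le_of_lt hbound (ENNReal.add_lt_top.2 hxfin)
    rw [htsum]
    have hγie : h (γ i) = ∫ y, K (γ i) y * h y ∂μ := (congrFun hfix (γ i)).symm
    have hxe : h x = ∫ y, K x y * h y ∂μ := (congrFun hfix x).symm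
    have hdiff : h (γ i) - h x = ∫ y, (K (γ i) y - K x y) * h y ∂μ := by
      rw [hγie, hxe, ← integral_sub hint2 hint1]
      congr 1
      funext y
      ring
    rw [hdiff]
    calc (‖∫ y, (K (γ i) y - K x y) * h y ∂μ‖₊ : ℝ≥0∞)
        ≤ ∫⁻ y, (‖(K (γ i) y - K x y) * h y‖₊ : ℝ≥0∞) ∂μ :=
          enorm_integral_le_lintegral_enorm _
      _ = _ := hgx
  have hmain := aux_norm μ (μ.restrict Ω) Measure.restrict_le_self hBmeas hB1 hB2 hp hmem
    haemain
  refine hmain.trans ?_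
  have hrhs : ENNReal.ofReal ((schurSθ μ K θ).toReal * dHaus (Set.range γ) Ω ^ θ)
      = ENNReal.ofReal (δ₀ ^ θ) * schurSθ μ K θ := by
    rw [ENNReal.ofReal_mul ENNReal.toReal_nonneg, ← hδ₀def,
      ENNReal.ofReal_toReal hK.ne, mul_comm]
  rw [hrhs]
  exact mul_le_mul_left hCmM _

end
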